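/- Let a < b be reals, let U_n be an (n+1)-dimensional subspace of C^n([a,b],ℝ) with a Bernstein basis p_{n,0},…,p_{n,n}, let f_0 ∈ U_n be strictly positive on [a,b], and suppose D_{f_0}U_n := { (f/f_0)′ : f ∈ U_n } has a Bernstein basis q_{n-1,0},…,q_{n-1,n-1}. Define c_0 := 0, q_{n-1,-1} := 0, d_n := 0, q_{n-1,n} := 0; for k = 1,…,n define c_k := p_{n,k}^{(k)}(a) / (f_0(a) · q_{n-1,k-1}^{(k-1)}(a)), and for k = 0,…,n−1 define d_k := p_{n,k}^{(n−k)}(b) / (f_0(b) · q_{n-1,k}^{(n−1−k)}(b)). Then each such c_k and d_k is nonzero, and for every k = 0,…,n one has (p_{n,k}/f_0)′(x) = c_k q_{n-1,k-1}(x) + d_k q_{n-1,k}(x) for all x ∈ [a,b]; moreover c_k equals the limit as x ↓ a of (p_{n,k})′(x) / (f_0(a) q_{n-1,k-1}(x)) for k ≥ 1, and d_k equals the limit as x ↑ b of (p_{n,k})′(x) / (f_0(b) q_{n-1,k}(x)) for k ≤ n−1. -/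

import Mathlib

open Set Filter Topology

noncomputable section

private lemma exists_isOpen_contDiffOn {m : ℕ} {f : ℝ → ℝ} {x : ℝ}
    (h : ContDiffAt ℝ m f x) : ∃ u, IsOpen u ∧ x ∈ u ∧ ContDiffOn ℝ m f u := by
  obtain ⟨u, uo, xu, hu⟩ := h.contDiffOn' le_rfl (by simp)
  exact ⟨u, uo, xu, by simpa using hu⟩

private lemma iteratedDeriv_congr_nhds {m : ℕ} {f g : ℝ → ℝ} {x : ℝ}
    (h : f =ᶠ[𝓝 x] g) : iteratedDeriv m f x = iteratedDeriv m g x := by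
  rw [← iteratedDerivWithin_univ, ← iteratedDerivWithin_univ]
  simp only [iteratedDerivWithin]
  rw [Filter.EventuallyEq.iteratedFDerivWithin_eq (by simpa [nhdsWithin_univ] using h) h.eq_of_nhds m]

private lemma iteratedDerivWithin_isOpen {m : ℕ} {f : ℝ → ℝ} {s : Set ℝ} (hs : IsOpen s)
    {x : ℝ} (hx : x ∈ s) : iteratedDerivWithin m f s x = iteratedDeriv m f x := by
  rw [iteratedDerivWithin_eq_iteratedFDerivWithin, iteratedDeriv_eq_iteratedFDeriv,
    iteratedFDerivWithin_of_isOpen m hs hx]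

private lemma iteratedDeriv_add_at {m : ℕ} {f g : ℝ → ℝ} {x : ℝ}
    (hf : ContDiffAt ℝ m f x) (hg : ContDiffAt ℝ m g x) :
    iteratedDeriv m (fun y => f y + g y) x = iteratedDeriv m f x + iteratedDeriv m g x := by
  obtain ⟨u, uo, xu, hu⟩ := exists_isOpen_contDiffOn hf
  obtain ⟨v, vo, xv, hv⟩ := exists_isOpen_contDiffOn hg
  have ho : IsOpen (u ∩ v) := uo.inter vo
  have hx : x ∈ u ∩ v := ⟨xu, xv⟩
  rw [← iteratedDerivWithin_isOpen ho hx, ← iteratedDerivWithin_isOpen ho hx,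
    ← iteratedDerivWithin_isOpen ho hx]
  exact iteratedDerivWithin_add hx ho.uniqueDiffOn (hu.mono inter_subset_left x hx)
    (hv.mono inter_subset_right x hx)

private lemma iteratedDeriv_smul_at {m : ℕ} {f : ℝ → ℝ} {x : ℝ} (c : ℝ)
    (hf : ContDiffAt ℝ m f x) :
    iteratedDeriv m (fun y => c * f y) x = c * iteratedDeriv m f x := by
  obtain ⟨u, uo, xu, hu⟩ := exists_isOpen_contDiffOn hf
  rw [← iteratedDerivWithin_isOpen uo xu, ← iteratedDerivWithin_isOpen uo xu]
  simpa [smul_eq_mul] using iteratedDerivWithin_const_smul (𝕜 := ℝ) (s := u) (x := x)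
    xu uo.uniqueDiffOn c hu

private lemma contDiffAt_deriv {m : ℕ} {f : ℝ → ℝ} {x : ℝ}
    (h : ContDiffAt ℝ ((m + 1 : ℕ)) f x) : ContDiffAt ℝ m (deriv f) x := by
  obtain ⟨u, uo, xu, hu⟩ := exists_isOpen_contDiffOn (m := m + 1) (by exact_mod_cast h)
  have := hu.deriv_of_isOpen uo (m := m) (by exact_mod_cast le_rfl)
  exact this.contDiffAt (uo.mem_nhds xu)

private lemma iteratedDeriv_sum_at {ι : Type*} {m : ℕ} {x : ℝ} (s : Finset ι) (F : ι → ℝ → ℝ)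
    (h : ∀ i ∈ s, ContDiffAt ℝ m (F i) x) :
    iteratedDeriv m (fun y => ∑ i ∈ s, F i y) x = ∑ i ∈ s, iteratedDeriv m (F i) x := by
  classical
  induction s using Finset.induction with
  | empty => simp [iteratedDeriv_eq_iteratedFDeriv, iteratedFDeriv_zero_fun]
  | insert j t hni ih =>
    simp only [Finset.sum_insert hni]
    rw [iteratedDeriv_add_at (h j (Finset.mem_insert_self j t))
      (ContDiffAt.sum fun i hi => h i (Finset.mem_insert_of_mem hi)),
      ih fun i hi => h i (Finset.mem_insert_of_mem hi)]

private lemma iteratedDeriv_mul_of_zeros : ∀ (m : ℕ) (u w : ℝ → ℝ) (x : ℝ),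
    ContDiffAt ℝ m u x → ContDiffAt ℝ m w x → (∀ j < m, iteratedDeriv j u x = 0) →
    iteratedDeriv m (fun y => u y * w y) x = iteratedDeriv m u x * w x := by
  intro m
  induction m with
  | zero => intro u w x _ _ _; simp [iteratedDeriv_zero]
  | succ m ih =>
    intro u w x hu hw h0
    have hle : ((m : ℕ∞) : WithTop ℕ∞) ≤ ((m + 1 : ℕ) : WithTop ℕ∞) := by
      exact_mod_cast Nat.le_succ m
    have hu' : ContDiffAt ℝ m (deriv u) x := contDiffAt_deriv hu
    have hw' : ContDiffAt ℝ m (deriv w) x := contDiffAt_deriv hw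
    have hum : ContDiffAt ℝ m u x := hu.of_le hle
    have hwm : ContDiffAt ℝ m w x := hw.of_le hle
    have h1e : ∀ᶠ y in 𝓝 x, ContDiffAt ℝ (m + 1 : ℕ) u y := hu.eventually (by simp)
    have h2e : ∀ᶠ y in 𝓝 x, ContDiffAt ℝ (m + 1 : ℕ) w y := hw.eventually (by simp)
    have hone : (1 : WithTop ℕ∞) ≤ ((m + 1 : ℕ) : WithTop ℕ∞) := by
      exact_mod_cast Nat.succ_le_succ (Nat.zero_le m)
    have hev : deriv (fun y => u y * w y) =ᶠ[𝓝 x]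
        fun y => deriv u y * w y + u y * deriv w y := by
      filter_upwards [h1e, h2e] with y h1 h2
      exact deriv_fun_mul (h1.differentiableAt (by simp)) (h2.differentiableAt (by simp))
    rw [iteratedDeriv_succ', iteratedDeriv_congr_nhds hev,
      iteratedDeriv_add_at (hu'.mul hwm) (hum.mul hw'),
      ih (deriv u) w x hu' hwm (fun j hj => by
        rw [show iteratedDeriv j (deriv u) = iteratedDeriv (j + 1) u from
          (iteratedDeriv_succ' ..).symm]
        exact h0 (j + 1) (by omega)),
      ih u (deriv w) x hum hw' (fun j hj => h0 j (by omega)),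
      h0 m (by omega),
      show iteratedDeriv m (deriv u) = iteratedDeriv (m + 1) u from (iteratedDeriv_succ' ..).symm]
    ring

private lemma iteratedDeriv_div_of_zeros {m : ℕ} {u v : ℝ → ℝ} {x : ℝ}
    (hu : ContDiffAt ℝ m u x) (hv : ContDiffAt ℝ m v x) (hvx : v x ≠ 0)
    (h0 : ∀ j < m, iteratedDeriv j u x = 0) :
    iteratedDeriv m (fun y => u y / v y) x = iteratedDeriv m u x / v x := by
  have : (fun y => u y / v y) = fun y => u y * (v y)⁻¹ := by
    funext y; rw [div_eq_mul_inv]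
  rw [this, iteratedDeriv_mul_of_zeros m u (fun y => (v y)⁻¹) x hu (hv.inv hvx) h0,
    div_eq_mul_inv]

private lemma tendsto_div_pow_right : ∀ (m : ℕ) (f : ℝ → ℝ) (a : ℝ),
    ContDiffAt ℝ m f a → (∀ j < m, iteratedDeriv j f a = 0) →
    Tendsto (fun x => f x / (x - a) ^ m) (𝓝[>] a)
      (𝓝 (iteratedDeriv m f a / (Nat.factorial m))) := by
  intro m
  induction m with
  | zero =>
    intro f a hf _
    simpa using (hf.continuousAt.tendsto).mono_left nhdsWithin_le_nhds
  | succ m ih =>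
    intro f a hf h0
    have hone : (1 : WithTop ℕ∞) ≤ ((m + 1 : ℕ) : WithTop ℕ∞) := by
      exact_mod_cast Nat.succ_le_succ (Nat.zero_le m)
    have hfe : ∀ᶠ y in 𝓝 a, ContDiffAt ℝ (m + 1 : ℕ) f y := hf.eventually (by simp)
    have hff' : ∀ᶠ x in 𝓝[>] a, HasDerivAt f (deriv f x) x := by
      apply (hfe.filter_mono nhdsWithin_le_nhds).mono
      intro y hy
      exact (hy.differentiableAt (by simp)).hasDerivAt
    have hgg' : ∀ᶠ x in 𝓝[>] a, HasDerivAt (fun x => (x - a) ^ (m + 1))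
        ((m + 1 : ℝ) * (x - a) ^ m) x := by
      filter_upwards with x
      have : HasDerivAt (fun x : ℝ => x - a) 1 x := (hasDerivAt_id x).sub_const a
      simpa using this.fun_pow (m + 1)
    have hg' : ∀ᶠ x in 𝓝[>] a, (m + 1 : ℝ) * (x - a) ^ m ≠ 0 := by
      filter_upwards [self_mem_nhdsWithin] with x hx
      have : (0 : ℝ) < x - a := sub_pos.mpr hx
      positivity
    have hfa : Tendsto f (𝓝[>] a) (𝓝 0) := by
      have := (hf.continuousAt.tendsto).mono_left (nhdsWithin_le_nhds (s := Ioi a))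
      rw [show f a = 0 by simpa [iteratedDeriv_zero] using h0 0 (by omega)] at this
      exact this
    have hga : Tendsto (fun x => (x - a) ^ (m + 1)) (𝓝[>] a) (𝓝 0) := by
      have : Tendsto (fun x : ℝ => (x - a) ^ (m + 1)) (𝓝 a) (𝓝 ((a - a) ^ (m + 1))) :=
        ((continuous_id.sub continuous_const).pow (m + 1)).tendsto a
      simpa using this.mono_left nhdsWithin_le_nhds
    have hdiv : Tendsto (fun x => deriv f x / ((m + 1 : ℝ) * (x - a) ^ m)) (𝓝[>] a)
        (𝓝 (iteratedDeriv (m + 1) f a / (Nat.factorial (m + 1)))) := by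
      have hIH := ih (deriv f) a (contDiffAt_deriv hf) (fun j hj => by
        rw [show iteratedDeriv j (deriv f) = iteratedDeriv (j + 1) f from
          (iteratedDeriv_succ' ..).symm]
        exact h0 (j + 1) (by omega))
      have := hIH.div_const (m + 1 : ℝ)
      rw [show iteratedDeriv m (deriv f) = iteratedDeriv (m + 1) f from
        (iteratedDeriv_succ' ..).symm] at this
      have heq : iteratedDeriv (m + 1) f a / (Nat.factorial m) / (m + 1 : ℝ)
          = iteratedDeriv (m + 1) f a / (Nat.factorial (m + 1)) := by
        rw [Nat.factorial_succ, div_div]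
        push_cast
        ring_nf
      rw [heq] at this
      apply this.congr
      intro x
      rw [div_div]
      ring_nf
    exact HasDerivAt.lhopital_zero_nhdsGT hff' hgg' hg' hfa hga hdiv

private lemma tendsto_div_pow_left : ∀ (m : ℕ) (f : ℝ → ℝ) (b : ℝ),
    ContDiffAt ℝ m f b → (∀ j < m, iteratedDeriv j f b = 0) →
    Tendsto (fun x => f x / (x - b) ^ m) (𝓝[<] b)
      (𝓝 (iteratedDeriv m f b / (Nat.factorial m))) := by
  intro m
  induction m with
  | zero =>
    intro f b hf _
    simpa using (hf.continuousAt.tendsto).mono_left nhdsWithin_le_nhds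
  | succ m ih =>
    intro f b hf h0
    have hone : (1 : WithTop ℕ∞) ≤ ((m + 1 : ℕ) : WithTop ℕ∞) := by
      exact_mod_cast Nat.succ_le_succ (Nat.zero_le m)
    have hfe : ∀ᶠ y in 𝓝 b, ContDiffAt ℝ (m + 1 : ℕ) f y := hf.eventually (by simp)
    have hff' : ∀ᶠ x in 𝓝[<] b, HasDerivAt f (deriv f x) x := by
      apply (hfe.filter_mono nhdsWithin_le_nhds).mono
      intro y hy
      exact (hy.differentiableAt (by simp)).hasDerivAt
    have hgg' : ∀ᶠ x in 𝓝[<] b, HasDerivAt (fun x => (x - b) ^ (m + 1))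
        ((m + 1 : ℝ) * (x - b) ^ m) x := by
      filter_upwards with x
      have : HasDerivAt (fun x : ℝ => x - b) 1 x := (hasDerivAt_id x).sub_const b
      simpa using this.fun_pow (m + 1)
    have hg' : ∀ᶠ x in 𝓝[<] b, (m + 1 : ℝ) * (x - b) ^ m ≠ 0 := by
      filter_upwards [self_mem_nhdsWithin] with x hx
      exact mul_ne_zero (by positivity) (pow_ne_zero _ (sub_ne_zero.mpr (ne_of_lt hx)))
    have hfa : Tendsto f (𝓝[<] b) (𝓝 0) := by
      have := (hf.continuousAt.tendsto).mono_left (nhdsWithin_le_nhds (s := Iio b))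
      rw [show f b = 0 by simpa [iteratedDeriv_zero] using h0 0 (by omega)] at this
      exact this
    have hga : Tendsto (fun x => (x - b) ^ (m + 1)) (𝓝[<] b) (𝓝 0) := by
      have : Tendsto (fun x : ℝ => (x - b) ^ (m + 1)) (𝓝 b) (𝓝 ((b - b) ^ (m + 1))) :=
        ((continuous_id.sub continuous_const).pow (m + 1)).tendsto b
      simpa using this.mono_left nhdsWithin_le_nhds
    have hdiv : Tendsto (fun x => deriv f x / ((m + 1 : ℝ) * (x - b) ^ m)) (𝓝[<] b)
        (𝓝 (iteratedDeriv (m + 1) f b / (Nat.factorial (m + 1)))) := by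
      have hIH := ih (deriv f) b (contDiffAt_deriv hf) (fun j hj => by
        rw [show iteratedDeriv j (deriv f) = iteratedDeriv (j + 1) f from
          (iteratedDeriv_succ' ..).symm]
        exact h0 (j + 1) (by omega))
      have := hIH.div_const (m + 1 : ℝ)
      rw [show iteratedDeriv m (deriv f) = iteratedDeriv (m + 1) f from
        (iteratedDeriv_succ' ..).symm] at this
      have heq : iteratedDeriv (m + 1) f b / (Nat.factorial m) / (m + 1 : ℝ)
          = iteratedDeriv (m + 1) f b / (Nat.factorial (m + 1)) := by
        rw [Nat.factorial_succ, div_div]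
        push_cast
        ring_nf
      rw [heq] at this
      apply this.congr
      intro x
      rw [div_div]
      ring_nf
    exact HasDerivAt.lhopital_zero_nhdsLT hff' hgg' hg' hfa hga hdiv

private lemma tendsto_ratio_right {m : ℕ} {f g : ℝ → ℝ} {a : ℝ}
    (hf : ContDiffAt ℝ m f a) (hg : ContDiffAt ℝ m g a)
    (hf0 : ∀ j < m, iteratedDeriv j f a = 0) (hg0 : ∀ j < m, iteratedDeriv j g a = 0)
    (hgm : iteratedDeriv m g a ≠ 0) :
    Tendsto (fun x => f x / g x) (𝓝[>] a) (𝓝 (iteratedDeriv m f a / iteratedDeriv m g a)) := by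
  have h1 := tendsto_div_pow_right m f a hf hf0
  have h2 := tendsto_div_pow_right m g a hg hg0
  have hfact : (Nat.factorial m : ℝ) ≠ 0 := Nat.cast_ne_zero.mpr (Nat.factorial_ne_zero m)
  have h3 := h1.div h2 (div_ne_zero hgm hfact)
  rw [show iteratedDeriv m f a / ↑(Nat.factorial m) / (iteratedDeriv m g a / ↑(Nat.factorial m))
      = iteratedDeriv m f a / iteratedDeriv m g a by
    rw [div_div_div_comm, div_self hfact, div_one]] at h3
  apply h3.congr'
  filter_upwards [self_mem_nhdsWithin] with x hx
  have hp : ((x - a) ^ m : ℝ) ≠ 0 := pow_ne_zero _ (sub_ne_zero.mpr (ne_of_gt hx))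
  simp only [Pi.div_apply]
  rw [div_div_div_comm, div_self hp, div_one]

private lemma tendsto_ratio_left {m : ℕ} {f g : ℝ → ℝ} {b : ℝ}
    (hf : ContDiffAt ℝ m f b) (hg : ContDiffAt ℝ m g b)
    (hf0 : ∀ j < m, iteratedDeriv j f b = 0) (hg0 : ∀ j < m, iteratedDeriv j g b = 0)
    (hgm : iteratedDeriv m g b ≠ 0) :
    Tendsto (fun x => f x / g x) (𝓝[<] b) (𝓝 (iteratedDeriv m f b / iteratedDeriv m g b)) := by
  have h1 := tendsto_div_pow_left m f b hf hf0
  have h2 := tendsto_div_pow_left m g b hg hg0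
  have hfact : (Nat.factorial m : ℝ) ≠ 0 := Nat.cast_ne_zero.mpr (Nat.factorial_ne_zero m)
  have h3 := h1.div h2 (div_ne_zero hgm hfact)
  rw [show iteratedDeriv m f b / ↑(Nat.factorial m) / (iteratedDeriv m g b / ↑(Nat.factorial m))
      = iteratedDeriv m f b / iteratedDeriv m g b by
    rw [div_div_div_comm, div_self hfact, div_one]] at h3
  apply h3.congr'
  filter_upwards [self_mem_nhdsWithin] with x hx
  have hp : ((x - b) ^ m : ℝ) ≠ 0 := pow_ne_zero _ (sub_ne_zero.mpr (ne_of_lt hx))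
  simp only [Pi.div_apply]
  rw [div_div_div_comm, div_self hp, div_one]

/-- Proposition: structural formula for the derivatives `(p k / f₀)'` in terms of the
Bernstein basis `q` of `D_{f₀}U`.  Here the families are indexed by `ℕ`: `p k` for
`k = 0, …, n` is a Bernstein basis of `U` (zero of order `k` at `a`, of order `n - k` at
`b`), and `q k` for `k = 0, …, n-1` is a Bernstein basis of
`D_{f₀}U = { (f/f₀)' : f ∈ U }` (zero of order `k` at `a`, of order `n - 1 - k` at `b`).
With the conventions `c 0 = 0`, `q (-1) = 0`, `d n = 0`, `q n = 0` (realized via the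
`if`-clauses below), the numbers `c k` (for `1 ≤ k ≤ n`) and `d k` (for `k < n`) are
nonzero, the formula `(p k / f₀)' = c k • q (k-1) + d k • q k` holds on `[a,b]`, and the
`c k`, `d k` are obtained as the indicated one-sided limits at `a` and `b`. -/
theorem bernstein_deriv_decomposition
    (n : ℕ) (a b : ℝ) (hab : a < b)
    (U : Submodule ℝ (ℝ → ℝ))
    (hUdim : Module.finrank ℝ ↥U = n + 1)
    (hUsmooth : ∀ f ∈ U, ContDiff ℝ (n : ℕ∞) f)
    (p : ℕ → ℝ → ℝ)
    (hpmem : ∀ k ≤ n, p k ∈ U)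
    (hpli : LinearIndependent ℝ (fun k : Fin (n + 1) => p (k : ℕ)))
    (hpspan : Submodule.span ℝ (Set.range (fun k : Fin (n + 1) => p (k : ℕ))) = U)
    (hpzero : ∀ k ≤ n,
      (∀ j : ℕ, j < k → iteratedDeriv j (p k) a = 0) ∧
      iteratedDeriv k (p k) a ≠ 0 ∧
      (∀ j : ℕ, j < n - k → iteratedDeriv j (p k) b = 0) ∧
      iteratedDeriv (n - k) (p k) b ≠ 0)
    (f₀ : ℝ → ℝ) (hf₀U : f₀ ∈ U)
    (hf₀pos : ∀ x ∈ Set.Icc a b, 0 < f₀ x)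
    (q : ℕ → ℝ → ℝ)
    (hqmem : ∀ k < n, ∃ f ∈ U, q k = deriv (fun x => f x / f₀ x))
    (hqspan : ∀ f ∈ U,
      deriv (fun x => f x / f₀ x) ∈
        Submodule.span ℝ (Set.range (fun k : Fin n => q (k : ℕ))))
    (hqli : LinearIndependent ℝ (fun k : Fin n => q (k : ℕ)))
    (hqzero : ∀ k < n,
      (∀ j : ℕ, j < k → iteratedDeriv j (q k) a = 0) ∧
      iteratedDeriv k (q k) a ≠ 0 ∧
      (∀ j : ℕ, j < n - 1 - k → iteratedDeriv j (q k) b = 0) ∧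
      iteratedDeriv (n - 1 - k) (q k) b ≠ 0)
    (c d : ℕ → ℝ)
    (hc0 : c 0 = 0)
    (hc : ∀ k, 1 ≤ k → k ≤ n →
      c k = iteratedDeriv k (p k) a / (f₀ a * iteratedDeriv (k - 1) (q (k - 1)) a))
    (hdn : d n = 0)
    (hd : ∀ k < n,
      d k = iteratedDeriv (n - k) (p k) b / (f₀ b * iteratedDeriv (n - 1 - k) (q k) b)) :
    (∀ k, 1 ≤ k → k ≤ n → c k ≠ 0) ∧
    (∀ k < n, d k ≠ 0) ∧
    (∀ k ≤ n, ∀ x ∈ Set.Icc a b,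
      deriv (fun y => p k y / f₀ y) x =
        c k * (if k = 0 then 0 else q (k - 1) x) + d k * (if k = n then 0 else q k x)) ∧
    (∀ k, 1 ≤ k → k ≤ n →
      Tendsto (fun x => deriv (p k) x / (f₀ a * q (k - 1) x)) (𝓝[>] a) (𝓝 (c k))) ∧
    (∀ k < n,
      Tendsto (fun x => deriv (p k) x / (f₀ b * q k x)) (𝓝[<] b) (𝓝 (d k))) := by
  have hamem : a ∈ Set.Icc a b := ⟨le_rfl, le_of_lt hab⟩
  have hbmem : b ∈ Set.Icc a b := ⟨le_of_lt hab, le_rfl⟩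
  have hfa : f₀ a ≠ 0 := ne_of_gt (hf₀pos a hamem)
  have hfb : f₀ b ≠ 0 := ne_of_gt (hf₀pos b hbmem)
  have hUat : ∀ f ∈ U, ∀ i : ℕ, i ≤ n → ∀ x : ℝ, ContDiffAt ℝ i f x := fun f hf i hi x =>
    ((hUsmooth f hf).contDiffAt).of_le (by exact_mod_cast hi)
  have hqsmooth : ∀ j < n, ∀ x : ℝ, f₀ x ≠ 0 → ContDiffAt ℝ (n - 1 : ℕ) (q j) x := by
    intro j hj x hx
    obtain ⟨f, hfU, hqe⟩ := hqmem j hj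
    rw [hqe]
    refine contDiffAt_deriv (m := n - 1) ?_
    rw [show n - 1 + 1 = n by omega]
    exact (hUat f hfU n le_rfl x).div (hUat f₀ hf₀U n le_rfl x) hx
  have hcne : ∀ k, 1 ≤ k → k ≤ n → c k ≠ 0 := by
    intro k h1 h2
    rw [hc k h1 h2]
    exact div_ne_zero (hpzero k h2).2.1
      (mul_ne_zero hfa (hqzero (k - 1) (by omega)).2.1)
  have hdne : ∀ k < n, d k ≠ 0 := by
    intro k hk
    rw [hd k hk]
    exact div_ne_zero (hpzero k (le_of_lt hk)).2.2.2
      (mul_ne_zero hfb (hqzero k hk).2.2.2)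
  refine ⟨hcne, hdne, ?_, ?_, ?_⟩
  · -- decomposition formula
    intro k hk x _hx
    rcases Nat.eq_zero_or_pos n with hn0 | hnpos
    · subst hn0
      have hk0 : k = 0 := by omega
      subst hk0
      have h0 := hqspan (p 0) (hpmem 0 le_rfl)
      rw [show (Set.range fun k : Fin 0 => q (k : ℕ)) = (∅ : Set (ℝ → ℝ)) from
        Set.range_eq_empty _, Submodule.span_empty, Submodule.mem_bot] at h0
      rw [show (deriv fun y => p 0 y / f₀ y) = (0 : ℝ → ℝ) from h0]
      simp
    · obtain ⟨lam, hlam⟩ := (Submodule.mem_span_range_iff_exists_fun ℝ).mp (hqspan (p k) (hpmem k hk))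
      have hGa : ∀ i : ℕ, i + 1 ≤ k →
          iteratedDeriv i (deriv fun y => p k y / f₀ y) a =
            iteratedDeriv (i + 1) (p k) a / f₀ a := by
        intro i hi
        rw [show iteratedDeriv i (deriv fun y => p k y / f₀ y)
            = iteratedDeriv (i + 1) (fun y => p k y / f₀ y) from (iteratedDeriv_succ' ..).symm]
        exact iteratedDeriv_div_of_zeros (hUat (p k) (hpmem k hk) (i + 1) (by omega) a)
          (hUat f₀ hf₀U (i + 1) (by omega) a) hfa
          (fun j hj => (hpzero k hk).1 j (by omega))
      have hGb : ∀ i : ℕ, i + 1 ≤ n - k →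
          iteratedDeriv i (deriv fun y => p k y / f₀ y) b =
            iteratedDeriv (i + 1) (p k) b / f₀ b := by
        intro i hi
        rw [show iteratedDeriv i (deriv fun y => p k y / f₀ y)
            = iteratedDeriv (i + 1) (fun y => p k y / f₀ y) from (iteratedDeriv_succ' ..).symm]
        exact iteratedDeriv_div_of_zeros (hUat (p k) (hpmem k hk) (i + 1) (by omega) b)
          (hUat f₀ hf₀U (i + 1) (by omega) b) hfb
          (fun j hj => (hpzero k hk).2.2.1 j (by omega))
      have hfun : (deriv fun y => p k y / f₀ y) = fun y => ∑ j : Fin n, lam j * q (j : ℕ) y := by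
        rw [← hlam]; funext y; simp [smul_eq_mul]
      have hsum : ∀ i : ℕ, i < n → ∀ z : ℝ, f₀ z ≠ 0 →
          iteratedDeriv i (deriv fun y => p k y / f₀ y) z =
            ∑ j : Fin n, lam j * iteratedDeriv i (q (j : ℕ)) z := by
        intro i hi z hz
        rw [hfun, iteratedDeriv_sum_at Finset.univ (fun j => fun y => lam j * q (j : ℕ) y)
          (fun j _ => contDiffAt_const.mul ((hqsmooth (j : ℕ) j.isLt z hz).of_le
            (by exact_mod_cast by omega)))]
        exact Finset.sum_congr rfl fun j _ => iteratedDeriv_smul_at (m := i) (lam j)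
          ((hqsmooth (j : ℕ) j.isLt z hz).of_le (by exact_mod_cast by omega))
      have claimA : ∀ m : ℕ, ∀ hm : m < n, m + 1 < k → lam ⟨m, hm⟩ = 0 := by
        intro m
        induction m using Nat.strong_induction_on with
        | _ m ih =>
          intro hm hmk
          have h1 : iteratedDeriv m (deriv fun y => p k y / f₀ y) a = 0 := by
            rw [hGa m (by omega), (hpzero k hk).1 (m + 1) (by omega), zero_div]
          rw [hsum m hm a hfa] at h1
          have hsingle : ∑ j : Fin n, lam j * iteratedDeriv m (q (j : ℕ)) a
              = lam ⟨m, hm⟩ * iteratedDeriv m (q m) a := by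
            apply Finset.sum_eq_single
            · intro j _ hne
              rcases lt_or_gt_of_ne (fun h : (j : ℕ) = m => hne (Fin.ext h)) with hlt | hgt
              · have := ih (j : ℕ) hlt j.isLt (by omega)
                rw [Fin.eta] at this
                rw [this, zero_mul]
              · rw [(hqzero (j : ℕ) j.isLt).1 m hgt, mul_zero]
            · intro habs; exact absurd (Finset.mem_univ _) habs
          rw [hsingle] at h1
          exact (mul_eq_zero.mp h1).resolve_right (hqzero m hm).2.1
      have claimB : ∀ m : ℕ, ∀ hm : m < n, k < m → lam ⟨m, hm⟩ = 0 := by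
        have main : ∀ m : ℕ, ∀ hm : m < n, k < m →
            (∀ j : ℕ, ∀ hj : j < n, m < j → lam ⟨j, hj⟩ = 0) → lam ⟨m, hm⟩ = 0 := by
          intro m hm hkm hup
          have h1 : iteratedDeriv (n - 1 - m) (deriv fun y => p k y / f₀ y) b = 0 := by
            rw [hGb (n - 1 - m) (by omega), (hpzero k hk).2.2.1 (n - 1 - m + 1) (by omega),
              zero_div]
          rw [hsum (n - 1 - m) (by omega) b hfb] at h1
          have hsingle : ∑ j : Fin n, lam j * iteratedDeriv (n - 1 - m) (q (j : ℕ)) b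
              = lam ⟨m, hm⟩ * iteratedDeriv (n - 1 - m) (q m) b := by
            apply Finset.sum_eq_single
            · intro j _ hne
              rcases lt_or_gt_of_ne (fun h : (j : ℕ) = m => hne (Fin.ext h)) with hlt | hgt
              · rw [(hqzero (j : ℕ) j.isLt).2.2.1 (n - 1 - m) (by omega), mul_zero]
              · have := hup (j : ℕ) j.isLt hgt
                rw [Fin.eta] at this
                rw [this, zero_mul]
            · intro habs; exact absurd (Finset.mem_univ _) habs
          rw [hsingle] at h1
          exact (mul_eq_zero.mp h1).resolve_right (hqzero m hm).2.2.2
        suffices H : ∀ t : ℕ, ∀ m : ℕ, ∀ hm : m < n, k < m → n - m ≤ t → lam ⟨m, hm⟩ = 0 by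
          intro m hm hkm; exact H n m hm hkm (by omega)
        intro t
        induction t with
        | zero => intro m hm _ ht; omega
        | succ t ih =>
          intro m hm hkm _
          exact main m hm hkm (fun j hj hmj => ih j hj (by omega) (by omega))
      have hck : 1 ≤ k → ∀ hkn : k - 1 < n, lam ⟨k - 1, hkn⟩ = c k := by
        intro h1 hkn
        have e1 : iteratedDeriv (k - 1) (deriv fun y => p k y / f₀ y) a
            = iteratedDeriv k (p k) a / f₀ a := by
          have := hGa (k - 1) (by omega)
          rwa [show k - 1 + 1 = k by omega] at this
        rw [hsum (k - 1) hkn a hfa] at e1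
        have hsingle : ∑ j : Fin n, lam j * iteratedDeriv (k - 1) (q (j : ℕ)) a
            = lam ⟨k - 1, hkn⟩ * iteratedDeriv (k - 1) (q (k - 1)) a := by
          apply Finset.sum_eq_single
          · intro j _ hne
            rcases lt_or_gt_of_ne (fun h : (j : ℕ) = k - 1 => hne (Fin.ext h)) with hlt | hgt
            · have := claimA (j : ℕ) j.isLt (by omega)
              rw [Fin.eta] at this
              rw [this, zero_mul]
            · rw [(hqzero (j : ℕ) j.isLt).1 (k - 1) hgt, mul_zero]
          · intro habs; exact absurd (Finset.mem_univ _) habs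
        rw [hsingle] at e1
        have hQ : iteratedDeriv (k - 1) (q (k - 1)) a ≠ 0 := (hqzero (k - 1) hkn).2.1
        rw [hc k h1 hk, eq_div_iff (mul_ne_zero hfa hQ)]
        calc lam ⟨k - 1, hkn⟩ * (f₀ a * iteratedDeriv (k - 1) (q (k - 1)) a)
            = (lam ⟨k - 1, hkn⟩ * iteratedDeriv (k - 1) (q (k - 1)) a) * f₀ a := by ring
          _ = (iteratedDeriv k (p k) a / f₀ a) * f₀ a := by rw [e1]
          _ = iteratedDeriv k (p k) a := div_mul_cancel₀ _ hfa
      have hdk : ∀ hkn : k < n, lam ⟨k, hkn⟩ = d k := by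
        intro hkn
        have e1 : iteratedDeriv (n - 1 - k) (deriv fun y => p k y / f₀ y) b
            = iteratedDeriv (n - k) (p k) b / f₀ b := by
          have := hGb (n - 1 - k) (by omega)
          rwa [show n - 1 - k + 1 = n - k by omega] at this
        rw [hsum (n - 1 - k) (by omega) b hfb] at e1
        have hsingle : ∑ j : Fin n, lam j * iteratedDeriv (n - 1 - k) (q (j : ℕ)) b
            = lam ⟨k, hkn⟩ * iteratedDeriv (n - 1 - k) (q k) b := by
          apply Finset.sum_eq_single
          · intro j _ hne
            rcases lt_or_gt_of_ne (fun h : (j : ℕ) = k => hne (Fin.ext h)) with hlt | hgt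
            · rw [(hqzero (j : ℕ) j.isLt).2.2.1 (n - 1 - k) (by omega), mul_zero]
            · have := claimB (j : ℕ) j.isLt hgt
              rw [Fin.eta] at this
              rw [this, zero_mul]
          · intro habs; exact absurd (Finset.mem_univ _) habs
        rw [hsingle] at e1
        have hQ : iteratedDeriv (n - 1 - k) (q k) b ≠ 0 := (hqzero k hkn).2.2.2
        rw [hd k hkn, eq_div_iff (mul_ne_zero hfb hQ)]
        calc lam ⟨k, hkn⟩ * (f₀ b * iteratedDeriv (n - 1 - k) (q k) b)
            = (lam ⟨k, hkn⟩ * iteratedDeriv (n - 1 - k) (q k) b) * f₀ b := by ring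
          _ = (iteratedDeriv (n - k) (p k) b / f₀ b) * f₀ b := by rw [e1]
          _ = iteratedDeriv (n - k) (p k) b := div_mul_cancel₀ _ hfb
      have hGx : (deriv fun y => p k y / f₀ y) x = ∑ j : Fin n, lam j * q (j : ℕ) x := by
        rw [hfun]
      rw [hGx]
      by_cases hk0 : k = 0
      · subst hk0
        rw [if_pos rfl, if_neg (by omega)]
        have hs : ∑ j : Fin n, lam j * q (j : ℕ) x = lam ⟨0, hnpos⟩ * q 0 x := by
          apply Finset.sum_eq_single
          · intro j _ hne
            have hgt : 0 < (j : ℕ) := by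
              rcases Nat.eq_zero_or_pos (j : ℕ) with h | h
              · exact absurd (Fin.ext h) hne
              · exact h
            have := claimB (j : ℕ) j.isLt hgt
            rw [Fin.eta] at this
            rw [this, zero_mul]
          · intro habs; exact absurd (Finset.mem_univ _) habs
        rw [hs, hdk hnpos]
        ring
      · by_cases hkn : k = n
        · rw [if_neg hk0, if_pos hkn]
          have hs : ∑ j : Fin n, lam j * q (j : ℕ) x = lam ⟨k - 1, by omega⟩ * q (k - 1) x := by
            apply Finset.sum_eq_single
            · intro j _ hne
              have hlt : (j : ℕ) < k - 1 := by
                have := j.isLt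
                rcases Nat.lt_or_ge (j : ℕ) (k - 1) with h | h
                · exact h
                · exact absurd (Fin.ext (show (j : ℕ) = k - 1 by omega)) hne
              have := claimA (j : ℕ) j.isLt (by omega)
              rw [Fin.eta] at this
              rw [this, zero_mul]
            · intro habs; exact absurd (Finset.mem_univ _) habs
          rw [hs, hck (by omega) (by omega)]
          ring
        · rw [if_neg hk0, if_neg hkn]
          have hkpos : 1 ≤ k := by omega
          have hkltn : k < n := by omega
          have hne : (⟨k - 1, by omega⟩ : Fin n) ≠ ⟨k, hkltn⟩ := by
            simp only [ne_eq, Fin.mk.injEq]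
            omega
          have hs : ∑ j : Fin n, lam j * q (j : ℕ) x
              = ∑ j ∈ ({⟨k - 1, by omega⟩, ⟨k, hkltn⟩} : Finset (Fin n)),
                  lam j * q (j : ℕ) x := by
            refine (Finset.sum_subset (Finset.subset_univ _) ?_).symm
            intro j _ hj
            simp only [Finset.mem_insert, Finset.mem_singleton] at hj
            push_neg at hj
            have hj1 : (j : ℕ) ≠ k - 1 := fun h => hj.1 (Fin.ext h)
            have hj2 : (j : ℕ) ≠ k := fun h => hj.2 (Fin.ext h)
            rcases Nat.lt_or_ge (j : ℕ) k with h | h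
            · have := claimA (j : ℕ) j.isLt (by omega)
              rw [Fin.eta] at this
              rw [this, zero_mul]
            · have := claimB (j : ℕ) j.isLt (by omega)
              rw [Fin.eta] at this
              rw [this, zero_mul]
          rw [hs, Finset.sum_pair hne, hck hkpos (by omega), hdk hkltn]
  · -- limits at a
    intro k h1 h2
    have hk1n : k - 1 < n := by omega
    have hf : ContDiffAt ℝ (k - 1 : ℕ) (deriv (p k)) a := by
      refine contDiffAt_deriv (m := k - 1) ?_
      rw [show k - 1 + 1 = k by omega]
      exact hUat (p k) (hpmem k h2) k h2 a
    have hg : ContDiffAt ℝ (k - 1 : ℕ) (fun x => f₀ a * q (k - 1) x) a :=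
      contDiffAt_const.mul ((hqsmooth (k - 1) hk1n a hfa).of_le (by exact_mod_cast by omega))
    have hf0 : ∀ j < k - 1, iteratedDeriv j (deriv (p k)) a = 0 := by
      intro j hj
      rw [show iteratedDeriv j (deriv (p k)) = iteratedDeriv (j + 1) (p k) from
        (iteratedDeriv_succ' ..).symm]
      exact (hpzero k h2).1 (j + 1) (by omega)
    have hg0 : ∀ j < k - 1, iteratedDeriv j (fun x => f₀ a * q (k - 1) x) a = 0 := by
      intro j hj
      rw [iteratedDeriv_smul_at (m := j) (f₀ a) ((hqsmooth (k - 1) hk1n a hfa).of_le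
        (by exact_mod_cast by omega)), (hqzero (k - 1) hk1n).1 j hj, mul_zero]
    have hgm : iteratedDeriv (k - 1) (fun x => f₀ a * q (k - 1) x) a ≠ 0 := by
      rw [iteratedDeriv_smul_at (f₀ a) ((hqsmooth (k - 1) hk1n a hfa).of_le
        (by exact_mod_cast by omega))]
      exact mul_ne_zero hfa (hqzero (k - 1) hk1n).2.1
    have := tendsto_ratio_right hf hg hf0 hg0 hgm
    rw [iteratedDeriv_smul_at (f₀ a) ((hqsmooth (k - 1) hk1n a hfa).of_le
        (by exact_mod_cast by omega)),
      show iteratedDeriv (k - 1) (deriv (p k)) = iteratedDeriv (k - 1 + 1) (p k) from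
        (iteratedDeriv_succ' ..).symm, show k - 1 + 1 = k by omega, ← hc k h1 h2] at this
    exact this
  · -- limits at b
    intro k hk
    have hm := Nat.sub_lt_sub_left (by omega : k < n) (by omega : k < n)
    have hle : ((n - 1 - k : ℕ) : WithTop ℕ∞) ≤ ((n - 1 : ℕ) : WithTop ℕ∞) := by
      exact_mod_cast by omega
    have hf : ContDiffAt ℝ (n - 1 - k : ℕ) (deriv (p k)) b := by
      refine contDiffAt_deriv (m := n - 1 - k) ?_
      exact (hUat (p k) (hpmem k (le_of_lt hk)) (n - 1 - k + 1) (by omega) b)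
    have hg : ContDiffAt ℝ (n - 1 - k : ℕ) (fun x => f₀ b * q k x) b :=
      contDiffAt_const.mul ((hqsmooth k hk b hfb).of_le hle)
    have hf0 : ∀ j < n - 1 - k, iteratedDeriv j (deriv (p k)) b = 0 := by
      intro j hj
      rw [show iteratedDeriv j (deriv (p k)) = iteratedDeriv (j + 1) (p k) from
        (iteratedDeriv_succ' ..).symm]
      exact (hpzero k (le_of_lt hk)).2.2.1 (j + 1) (by omega)
    have hg0 : ∀ j < n - 1 - k, iteratedDeriv j (fun x => f₀ b * q k x) b = 0 := by
      intro j hj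
      rw [iteratedDeriv_smul_at (m := j) (f₀ b) ((hqsmooth k hk b hfb).of_le
        (by exact_mod_cast by omega)), (hqzero k hk).2.2.1 j hj, mul_zero]
    have hgm : iteratedDeriv (n - 1 - k) (fun x => f₀ b * q k x) b ≠ 0 := by
      rw [iteratedDeriv_smul_at (f₀ b) ((hqsmooth k hk b hfb).of_le hle)]
      exact mul_ne_zero hfb (hqzero k hk).2.2.2
    have := tendsto_ratio_left hf hg hf0 hg0 hgm
    rw [iteratedDeriv_smul_at (f₀ b) ((hqsmooth k hk b hfb).of_le hle),
      show iteratedDeriv (n - 1 - k) (deriv (p k)) = iteratedDeriv (n - 1 - k + 1) (p k) from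
        (iteratedDeriv_succ' ..).symm, show n - 1 - k + 1 = n - k by omega,
      ← hd k hk] at this
    exact this
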